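/- (Stochastic one-step contraction estimate.) Let x^{(k+1)}, ŷ^{(k+1)} be generated by the deterministic prox updates with step sizes τ_{(k)} (scalar) and S_{(k)} = diag([S_{(k)}]_1,…,[S_{(k)}]_n), let y_i^{(k+1)} = ŷ_i^{(k+1)} with probability p_i > 0 and y_i^{(k+1)} = y_i^{(k)} otherwise (independently of the past), and let ȳ^{(k+1)} = y^{(k+1)} + θ_{(k)} Q (y^{(k+1)} − y^{(k)}). Let {v_i} be ESO parameters of S_{(k)}^{1/2} A τ_{(k)}^{1/2} and γ² = max_i v_i/p_i. Then for any saddle point (x♯, y♯): E^{(k,k−1)} { ‖x^{(k)} − x♯‖²_{τ_{(k)}^{-1}} + ‖y^{(k)} − y♯‖²_{Q S_{(k)}^{-1} + 2M(Q − I)} − 2 θ_{(k−1)} ⟨Q A(x^{(k)} − x♯), y^{(k)} − y^{(k−1)}⟩ + (γ θ_{(k−1)})² ‖y^{(k)} − y^{(k−1)}‖²_{Q S_{(k)}^{-1}} } ≥ E^{(k+1,k)} { ‖x^{(k+1)} − x♯‖²_{τ_{(k)}^{-1} + 2μ_g I} + ‖y^{(k+1)} − y♯‖²_{Q S_{(k)}^{-1}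 + 2M Q} − 2 ⟨Q A(x^{(k+1)} − x♯), y^{(k+1)} − y^{(k)}⟩ + ‖y^{(k+1)} − y^{(k)}‖²_{Q S_{(k)}^{-1}} }. -/

import Mathlib

open scoped RealInnerProductSpace

/-- Probability that index `i` belongs to the random set, for the sampling distribution `P`. -/
noncomputable def probOf {n : ℕ} (P : Finset (Fin n) → ℝ) (i : Fin n) : ℝ :=
  ∑ R : Finset (Fin n), if i ∈ R then P R else 0

/-- `x = prox_τ^f(z)` for a scalar step size `τ > 0`. -/
def IsProxR {E : Type*} [NormedAddCommGroup E] [InnerProductSpace ℝ E]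
    (τ : ℝ) (f : E → ℝ) (z x : E) : Prop :=
  ∀ u : E, (1 / (2 * τ)) * ‖x - z‖ ^ 2 + f x ≤ (1 / (2 * τ)) * ‖u - z‖ ^ 2 + f u

/-- `x` is the proximal point `prox_B^f(z)` for the step size operator `B` with inverse
`Binv`, i.e. the minimizer of `u ↦ ½‖u − z‖²_{B⁻¹} + f(u)`. -/
def IsProx {E : Type*} [NormedAddCommGroup E] [InnerProductSpace ℝ E]
    (Binv : E →L[ℝ] E) (f : E → ℝ) (z x : E) : Prop :=
  ∀ u : E, (1 / 2) * ⟪Binv (x - z), x - z⟫ + f x ≤ (1 / 2) * ⟪Binv (u - z), u - z⟫ + f u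

section Helpers

variable {E : Type*} [NormedAddCommGroup E] [InnerProductSpace ℝ E]

lemma aux_limit {a b c : ℝ} (h : ∀ t : ℝ, t ∈ Set.Ioo (0:ℝ) 1 → a + (1 - t) * c ≤ b) :
    a + c ≤ b := by
  have key : ∀ n : ℕ, a + (1 - 1/((n:ℝ)+2)) * c ≤ b := by
    intro n
    refine h _ ⟨by positivity, ?_⟩
    rw [div_lt_one (by positivity)]
    have : (0:ℝ) ≤ (n:ℝ) := Nat.cast_nonneg n
    linarith
  have h1 : Filter.Tendsto (fun n : ℕ => 1/((n:ℝ)+2)) Filter.atTop (nhds 0) := by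
    simp only [one_div]
    exact Filter.Tendsto.comp tendsto_inv_atTop_zero
      (Filter.tendsto_atTop_add_const_right _ 2 tendsto_natCast_atTop_atTop)
  have h2 : Filter.Tendsto (fun n : ℕ => a + (1 - 1/((n:ℝ)+2)) * c) Filter.atTop
      (nhds (a + c)) := by
    have := ((tendsto_const_nhds (x := (1:ℝ)) (f := Filter.atTop (α := ℕ))).sub h1).mul
      (tendsto_const_nhds (x := c))
    simpa using (tendsto_const_nhds (x := a)).add this
  exact le_of_tendsto h2 (Filter.Eventually.of_forall key)

lemma inner_combo (T : E →L[ℝ] E) (x u : E) (t : ℝ) :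
    ⟪T ((1-t)•x + t•u), (1-t)•x + t•u⟫ =
      (1-t) * ⟪T x, x⟫ + t * ⟪T u, u⟫ - t*(1-t) * ⟪T (x-u), x-u⟫ := by
  simp only [map_add, map_smul, map_sub, inner_add_left, inner_add_right,
    inner_sub_left, inner_sub_right, real_inner_smul_left, real_inner_smul_right]
  ring

lemma norm_combo (x u : E) (t : ℝ) :
    ‖(1-t)•x + t•u‖^2 = (1-t) * ‖x‖^2 + t * ‖u‖^2 - t*(1-t) * ‖x-u‖^2 := by
  have := inner_combo (ContinuousLinearMap.id ℝ E) x u t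
  simpa only [ContinuousLinearMap.id_apply, real_inner_self_eq_norm_sq] using this

lemma strong_combo {μ : ℝ} {f : E → ℝ}
    (hf : ConvexOn ℝ Set.univ (fun u => f u - μ/2 * ‖u‖^2)) (x u : E) {t : ℝ}
    (ht0 : 0 ≤ t) (ht1 : t ≤ 1) :
    f ((1-t) • x + t • u) ≤ (1-t) * f x + t * f u - μ/2 * (t * (1-t)) * ‖x - u‖^2 := by
  have hc := hf.2 (Set.mem_univ x) (Set.mem_univ u)
    (show (0:ℝ) ≤ 1 - t by linarith) ht0 (by ring)
  simp only [smul_eq_mul] at hc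
  have hn := norm_combo x u t
  rw [hn] at hc
  nlinarith [hc]

lemma prox_strong_general (T : E →L[ℝ] E) {μ : ℝ} {f : E → ℝ}
    (hf : ConvexOn ℝ Set.univ (fun u => f u - μ/2 * ‖u‖^2)) {z xp : E}
    (hmin : ∀ u, (1/2) * ⟪T (xp - z), xp - z⟫ + f xp ≤ (1/2) * ⟪T (u - z), u - z⟫ + f u)
    (u : E) :
    (1/2) * ⟪T (xp - z), xp - z⟫ + f xp + ((1/2) * ⟪T (u - xp), u - xp⟫
      + μ/2 * ‖u - xp‖^2) ≤ (1/2) * ⟪T (u - z), u - z⟫ + f u := by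
  refine aux_limit ?_
  intro t ht
  set w : E := (1-t) • xp + t • u with hw
  have hm := hmin w
  have hwz : w - z = (1-t) • (xp - z) + t • (u - z) := by rw [hw]; module
  have he : (xp - z) - (u - z) = xp - u := by abel
  have hneg : xp - u = -(u - xp) := by abel
  have h2 : ⟪T (w - z), w - z⟫ = (1-t) * ⟪T (xp - z), xp - z⟫ + t * ⟪T (u - z), u - z⟫
      - t*(1-t) * ⟪T (u - xp), u - xp⟫ := by
    rw [hwz, inner_combo, he, hneg, map_neg, inner_neg_neg]
  rw [h2] at hm
  have hcw := strong_combo hf xp u ht.1.le ht.2.le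
  rw [norm_sub_rev] at hcw
  rw [← hw] at hcw
  have h5 : t * ((1/2) * ⟪T (xp - z), xp - z⟫ + f xp
      + (1 - t) * ((1/2) * ⟪T (u - xp), u - xp⟫ + μ/2 * ‖u - xp‖^2))
      ≤ t * ((1/2) * ⟪T (u - z), u - z⟫ + f u) := by nlinarith [hm, hcw]
  exact (mul_le_mul_iff_right₀ ht.1).mp h5

lemma subgrad_strong {μ : ℝ} {f : E → ℝ}
    (hf : ConvexOn ℝ Set.univ (fun u => f u - μ/2 * ‖u‖^2)) {x0 s : E}
    (h : ∀ u, f x0 + ⟪s, u - x0⟫ ≤ f u) (u : E) :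
    f x0 + ⟪s, u - x0⟫ + μ/2 * ‖u - x0‖^2 ≤ f u := by
  refine aux_limit ?_
  intro t ht
  set w : E := (1-t) • x0 + t • u with hw
  have hm := h w
  have hwz : w - x0 = t • (u - x0) := by rw [hw]; module
  rw [hwz, real_inner_smul_right] at hm
  have hcw := strong_combo hf x0 u ht.1.le ht.2.le
  rw [norm_sub_rev, ← hw] at hcw
  have h5 : t * (f x0 + ⟪s, u - x0⟫ + (1 - t) * (μ/2 * ‖u - x0‖^2))
      ≤ t * (f u) := by nlinarith [hm, hcw]
  have h6 := (mul_le_mul_iff_right₀ ht.1).mp h5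
  linarith

lemma proxR_strong {τ μ : ℝ} {f : E → ℝ}
    (hf : ConvexOn ℝ Set.univ (fun u => f u - μ/2 * ‖u‖^2)) {z xp : E}
    (hmin : IsProxR τ f z xp) (u : E) :
    (1/(2*τ)) * ‖xp - z‖^2 + f xp + ((1/(2*τ)) * ‖u - xp‖^2 + μ/2 * ‖u - xp‖^2)
      ≤ (1/(2*τ)) * ‖u - z‖^2 + f u := by
  have hform : ∀ v : E, (1/2) * ⟪(τ⁻¹ • ContinuousLinearMap.id ℝ E) v, v⟫
      = (1/(2*τ)) * ‖v‖^2 := by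
    intro v
    rw [ContinuousLinearMap.smul_apply, ContinuousLinearMap.id_apply, real_inner_smul_left,
      real_inner_self_eq_norm_sq]
    ring
  have h := prox_strong_general (τ⁻¹ • ContinuousLinearMap.id ℝ E) hf
    (fun u' => by rw [hform (xp - z), hform (u' - z)]; exact hmin u') u
  rw [hform (xp - z), hform (u - xp), hform (u - z)] at h
  exact h

lemma quad_expand [CompleteSpace E] {S T : E →L[ℝ] E}
    (hTS : T.comp S = ContinuousLinearMap.id ℝ E)
    (hST : S.comp T = ContinuousLinearMap.id ℝ E)
    (hS : IsSelfAdjoint S) (a b : E) :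
    ⟪T (a - S b), a - S b⟫ = ⟪T a, a⟫ - 2 * ⟪a, b⟫ + ⟪S b, b⟫ := by
  have hTSb : T (S b) = b := by
    have := congrArg (fun (f : E →L[ℝ] E) => f b) hTS; simpa using this
  have hSTa : S (T a) = a := by
    have := congrArg (fun (f : E →L[ℝ] E) => f a) hST; simpa using this
  have h1 : ⟪T a, S b⟫ = ⟪a, b⟫ := by
    rw [← hS.adjoint_eq, ContinuousLinearMap.adjoint_inner_right, hSTa]
  have h2 : ⟪b, a⟫ = ⟪a, b⟫ := real_inner_comm _ _
  simp only [map_sub, inner_sub_left, inner_sub_right, hTSb]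
  rw [h1, h2, real_inner_comm b (S b)]; ring

lemma inv_selfAdjoint [CompleteSpace E] {S T : E →L[ℝ] E}
    (hTS : T.comp S = ContinuousLinearMap.id ℝ E)
    (hST : S.comp T = ContinuousLinearMap.id ℝ E)
    (hS : IsSelfAdjoint S) : IsSelfAdjoint T := by
  have h1 : ContinuousLinearMap.adjoint (S.comp T) = ContinuousLinearMap.id ℝ E := by
    rw [hST]; exact ContinuousLinearMap.adjoint_id
  rw [ContinuousLinearMap.adjoint_comp, hS.adjoint_eq] at h1
  have : (ContinuousLinearMap.adjoint T)
      = (ContinuousLinearMap.adjoint T).comp (S.comp T) := by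
    rw [hST]; simp
  rw [← ContinuousLinearMap.comp_assoc, h1] at this
  exact ContinuousLinearMap.isSelfAdjoint_iff'.mpr (by simpa using this)

lemma op_comm {S T R : E →L[ℝ] E}
    (hTS : T.comp S = ContinuousLinearMap.id ℝ E)
    (hST : S.comp T = ContinuousLinearMap.id ℝ E)
    (hsq : R.comp R = S) : T.comp R = R.comp T := by
  have h1 : R.comp S = S.comp R := by
    rw [← hsq, ContinuousLinearMap.comp_assoc]
  calc T.comp R
      = (T.comp R).comp (S.comp T) := by rw [hST, ContinuousLinearMap.comp_id]
    _ = T.comp ((R.comp S).comp T) := by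
        rw [ContinuousLinearMap.comp_assoc, ContinuousLinearMap.comp_assoc]
    _ = (T.comp S).comp (R.comp T) := by
        rw [h1, ← ContinuousLinearMap.comp_assoc, ← ContinuousLinearMap.comp_assoc,
          ContinuousLinearMap.comp_assoc]
    _ = R.comp T := by rw [hTS, ContinuousLinearMap.id_comp]

lemma op_sqW {S T R : E →L[ℝ] E}
    (hTS : T.comp S = ContinuousLinearMap.id ℝ E)
    (hST : S.comp T = ContinuousLinearMap.id ℝ E)
    (hsq : R.comp R = S) (u : E) : R (T (R u)) = u := by
  have h2 : R.comp (T.comp R) = ContinuousLinearMap.id ℝ E := by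
    rw [op_comm hTS hST hsq, ← ContinuousLinearMap.comp_assoc, hsq, hST]
  have := congrArg (fun (f : E →L[ℝ] E) => f u) h2
  simpa using this

lemma op_Wnorm [CompleteSpace E] {S T R : E →L[ℝ] E}
    (hTS : T.comp S = ContinuousLinearMap.id ℝ E)
    (hST : S.comp T = ContinuousLinearMap.id ℝ E)
    (hsq : R.comp R = S) (hR : IsSelfAdjoint R) (u : E) :
    ‖T (R u)‖^2 = ⟪T u, u⟫ := by
  have hc : T (R u) = R (T u) := by
    have := congrArg (fun (f : E →L[ℝ] E) => f u) (op_comm hTS hST hsq)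
    simpa using this
  rw [← real_inner_self_eq_norm_sq, hc]
  nth_rewrite 1 [← hR.adjoint_eq]
  rw [ContinuousLinearMap.adjoint_inner_left]
  have h1 := congrArg (fun f : E →L[ℝ] E => f (T u)) hsq
  have h2 := congrArg (fun f : E →L[ℝ] E => f u) hST
  simp only [ContinuousLinearMap.comp_apply, ContinuousLinearMap.id_apply] at h1 h2
  rw [h1, h2]

lemma sum_ite_prob {n : ℕ} (P : Finset (Fin n) → ℝ) (hP1 : ∑ R : Finset (Fin n), P R = 1)
    (i : Fin n) (a b : ℝ) :
    ∑ R : Finset (Fin n), P R * (if i ∈ R then a else b)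
      = probOf P i * a + (1 - probOf P i) * b := by
  have h1 : ∀ R : Finset (Fin n), P R * (if i ∈ R then a else b)
      = (if i ∈ R then P R else 0) * a + (if i ∈ R then 0 else P R) * b := by
    intro R; by_cases h : i ∈ R <;> simp [h]
  rw [Finset.sum_congr rfl (fun R _ => h1 R), Finset.sum_add_distrib,
    ← Finset.sum_mul, ← Finset.sum_mul]
  have h2 : ∑ R : Finset (Fin n), (if i ∈ R then (0:ℝ) else P R) = 1 - probOf P i := by
    rw [← hP1]; unfold probOf
    rw [eq_sub_iff_add_eq, ← Finset.sum_add_distrib]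
    apply Finset.sum_congr rfl; intro R _; by_cases h : i ∈ R <;> simp [h]
  rw [h2]; rfl

end Helpers

set_option maxHeartbeats 2000000 in
/-- Lemma 4, stochastic one-step contraction estimate.
With `x^{(k+1)}, ŷ^{(k+1)}` generated by the deterministic prox updates with scalar step
`τ_{(k)}` and block steps `[S_{(k)}]_i`, `y_i^{(k+1)} = ŷ_i^{(k+1)}` with probability
`p_i` (else unchanged), `ȳ^{(k)} = y^{(k)} + θ_{(k−1)} Q (y^{(k)} − y^{(k−1)})`, ESO
parameters `{v_i}` of `S_{(k)}^{1/2} A τ_{(k)}^{1/2}` and `γ² = max_i v_i/p_i`, for any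
saddle point `(x♯, y♯)` (everything conditioned on the history before step `k`, the
expectations running over the samplings `𝕊^{(k)}` resp. `(𝕊^{(k)}, 𝕊^{(k+1)})`):
`E{‖x^{(k)}−x♯‖²_{τ_k⁻¹} + ‖y^{(k)}−y♯‖²_{QS_k⁻¹+2M(Q−I)}
   − 2θ_{k−1}⟨QA(x^{(k)}−x♯), y^{(k)}−y^{(k−1)}⟩ + (γθ_{k−1})²‖y^{(k)}−y^{(k−1)}‖²_{QS_k⁻¹}}
 ≥ E{‖x^{(k+1)}−x♯‖²_{τ_k⁻¹+2μ_g} + ‖y^{(k+1)}−y♯‖²_{QS_k⁻¹+2MQ}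
   − 2⟨QA(x^{(k+1)}−x♯), y^{(k+1)}−y^{(k)}⟩ + ‖y^{(k+1)}−y^{(k)}‖²_{QS_k⁻¹}}`. -/
theorem spdhg_stochastic_one_step_contraction {n : ℕ} (hn : 0 < n)
    (X : Type*) [NormedAddCommGroup X] [InnerProductSpace ℝ X] [CompleteSpace X]
    (Y : Fin n → Type*) [∀ i, NormedAddCommGroup (Y i)] [∀ i, InnerProductSpace ℝ (Y i)]
    [∀ i, CompleteSpace (Y i)]
    (A : ∀ i, X →L[ℝ] Y i) (g : X → ℝ) (fstar : ∀ i, Y i → ℝ)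
    -- strong convexity constants μ_g, μ_i ≥ 0
    (μg : ℝ) (μ : Fin n → ℝ) (hμg : 0 ≤ μg) (hμ : ∀ i, 0 ≤ μ i)
    (hg : ConvexOn ℝ Set.univ (fun u => g u - μg / 2 * ‖u‖ ^ 2))
    (hfstar : ∀ i, ConvexOn ℝ Set.univ (fun u => fstar i u - μ i / 2 * ‖u‖ ^ 2))
    -- the sampling distribution: proper
    (P : Finset (Fin n) → ℝ) (hP0 : ∀ R, 0 ≤ P R) (hP1 : ∑ R : Finset (Fin n), P R = 1)
    (hp : ∀ i, 0 < probOf P i)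
    -- the step sizes τ_{(k)} (scalar) and [S_{(k)}]_i, with inverses and square roots
    (τ1 : ℝ) (hτ1 : 0 < τ1)
    (S1 S1inv S1sqrt : ∀ i, Y i →L[ℝ] Y i)
    (hS1 : ∀ i, IsSelfAdjoint (S1 i)) (hS1pos : ∀ i, ∀ u : Y i, u ≠ 0 → 0 < ⟪S1 i u, u⟫)
    (hS1sqrt : ∀ i, IsSelfAdjoint (S1sqrt i))
    (hS1sq : ∀ i, (S1sqrt i).comp (S1sqrt i) = S1 i)
    (hS1inv : ∀ i, (S1inv i).comp (S1 i) = ContinuousLinearMap.id ℝ (Y i) ∧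
      (S1 i).comp (S1inv i) = ContinuousLinearMap.id ℝ (Y i))
    -- the extrapolation parameters θ_{(k−1)} and θ_{(k)}
    (θprev θcur : ℝ)
    -- ESO parameters {v_i} of S_{(k)}^{1/2} A τ_{(k)}^{1/2}
    (v : Fin n → ℝ)
    (hESO : ∀ z : ∀ i, Y i,
      ∑ R : Finset (Fin n), P R *
        ‖∑ i ∈ R, Real.sqrt τ1 •
          (ContinuousLinearMap.adjoint ((S1sqrt i).comp (A i))) (z i)‖ ^ 2
      ≤ ∑ i, probOf P i * v i * ‖z i‖ ^ 2)
    -- a saddle point w♯ = (x♯, y♯)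
    (xs : X) (ys : ∀ i, Y i)
    (hgs : ∀ u : X,
      g xs + ⟪-(∑ i, (ContinuousLinearMap.adjoint (A i)) (ys i)), u - xs⟫ ≤ g u)
    (hfs : ∀ i, ∀ u : Y i, fstar i (ys i) + ⟪A i xs, u - ys i⟫ ≤ fstar i u)
    -- the quantities at steps k−1 and k (conditioned on the past, 𝕊^{(k)} =: R)
    (xk : X) (ykm1 yhatk : ∀ i, Y i)
    (yk : Finset (Fin n) → ∀ i, Y i)
    (hyk : ∀ R i, yk R i = if i ∈ R then yhatk i else ykm1 i)
    (ybark : Finset (Fin n) → ∀ i, Y i)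
    (hybark : ∀ R i,
      ybark R i = yk R i + (θprev * (probOf P i)⁻¹) • (yk R i - ykm1 i))
    -- the updates of step k+1 (𝕊^{(k+1)} =: R')
    (x1 : Finset (Fin n) → X)
    (hx1 : ∀ R, IsProxR τ1 g
      (xk - τ1 • ∑ i, (ContinuousLinearMap.adjoint (A i)) (ybark R i)) (x1 R))
    (yhat1 : Finset (Fin n) → ∀ i, Y i)
    (hyhat1 : ∀ R i,
      IsProx (S1inv i) (fstar i) (yk R i + S1 i (A i (x1 R))) (yhat1 R i))
    (y1 : Finset (Fin n) → Finset (Fin n) → ∀ i, Y i)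
    (hy1 : ∀ R R' i, y1 R R' i = if i ∈ R' then yhat1 R i else yk R i) :
    let γsq : ℝ := Finset.univ.sup' (Finset.univ_nonempty_iff.mpr ⟨⟨0, hn⟩⟩)
      (fun i => v i / probOf P i)
    (∑ R : Finset (Fin n), ∑ R' : Finset (Fin n), P R * P R' *
        ((τ1⁻¹ + 2 * μg) * ‖x1 R - xs‖ ^ 2 +
          (∑ i, ((probOf P i)⁻¹ * ⟪S1inv i (y1 R R' i - ys i), y1 R R' i - ys i⟫ +
            2 * μ i * (probOf P i)⁻¹ * ‖y1 R R' i - ys i‖ ^ 2)) -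
          2 * (∑ i, (probOf P i)⁻¹ * ⟪A i (x1 R - xs), y1 R R' i - yk R i⟫) +
          (∑ i, (probOf P i)⁻¹ * ⟪S1inv i (y1 R R' i - yk R i), y1 R R' i - yk R i⟫))) ≤
      ∑ R : Finset (Fin n), P R *
        (τ1⁻¹ * ‖xk - xs‖ ^ 2 +
          (∑ i, ((probOf P i)⁻¹ * ⟪S1inv i (yk R i - ys i), yk R i - ys i⟫ +
            2 * μ i * ((probOf P i)⁻¹ - 1) * ‖yk R i - ys i‖ ^ 2)) -
          2 * θprev * (∑ i, (probOf P i)⁻¹ * ⟪A i (xk - xs), yk R i - ykm1 i⟫) +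
          γsq * θprev ^ 2 *
            (∑ i, (probOf P i)⁻¹ * ⟪S1inv i (yk R i - ykm1 i), yk R i - ykm1 i⟫)) := by
  classical
  intro γsq
  have hpne : ∀ i, probOf P i ≠ 0 := fun i => (hp i).ne'
  have hτne : τ1 ≠ 0 := hτ1.ne'
  -- Step B : expectation over the second sampling
  have hEXP : ∀ R : Finset (Fin n),
      (∑ R' : Finset (Fin n), P R' *
        ((τ1⁻¹ + 2 * μg) * ‖x1 R - xs‖ ^ 2 +
          (∑ i, ((probOf P i)⁻¹ * ⟪S1inv i (y1 R R' i - ys i), y1 R R' i - ys i⟫ +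
            2 * μ i * (probOf P i)⁻¹ * ‖y1 R R' i - ys i‖ ^ 2)) -
          2 * (∑ i, (probOf P i)⁻¹ * ⟪A i (x1 R - xs), y1 R R' i - yk R i⟫) +
          (∑ i, (probOf P i)⁻¹ * ⟪S1inv i (y1 R R' i - yk R i), y1 R R' i - yk R i⟫)))
      = (τ1⁻¹ + 2 * μg) * ‖x1 R - xs‖ ^ 2
        + (∑ i, ⟪S1inv i (yhat1 R i - ys i), yhat1 R i - ys i⟫)
        + (∑ i, 2 * μ i * ‖yhat1 R i - ys i‖ ^ 2)
        + (∑ i, ((probOf P i)⁻¹ - 1) * ⟪S1inv i (yk R i - ys i), yk R i - ys i⟫)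
        + (∑ i, 2 * μ i * ((probOf P i)⁻¹ - 1) * ‖yk R i - ys i‖ ^ 2)
        - 2 * (∑ i, ⟪A i (x1 R - xs), yhat1 R i⟫)
        + 2 * (∑ i, ⟪A i (x1 R - xs), yk R i⟫)
        + (∑ i, ⟪S1inv i (yhat1 R i - yk R i), yhat1 R i - yk R i⟫) := by
    intro R
    set Ai : Fin n → ℝ := fun i =>
      (probOf P i)⁻¹ * ⟪S1inv i (yhat1 R i - ys i), yhat1 R i - ys i⟫ +
        2 * μ i * (probOf P i)⁻¹ * ‖yhat1 R i - ys i‖ ^ 2 -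
        2 * ((probOf P i)⁻¹ * ⟪A i (x1 R - xs), yhat1 R i - yk R i⟫) +
        (probOf P i)⁻¹ * ⟪S1inv i (yhat1 R i - yk R i), yhat1 R i - yk R i⟫ with hAi
    set Bi : Fin n → ℝ := fun i =>
      (probOf P i)⁻¹ * ⟪S1inv i (yk R i - ys i), yk R i - ys i⟫ +
        2 * μ i * (probOf P i)⁻¹ * ‖yk R i - ys i‖ ^ 2 with hBi
    have hbr : ∀ R' : Finset (Fin n),
        ((τ1⁻¹ + 2 * μg) * ‖x1 R - xs‖ ^ 2 +
          (∑ i, ((probOf P i)⁻¹ * ⟪S1inv i (y1 R R' i - ys i), y1 R R' i - ys i⟫ +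
            2 * μ i * (probOf P i)⁻¹ * ‖y1 R R' i - ys i‖ ^ 2)) -
          2 * (∑ i, (probOf P i)⁻¹ * ⟪A i (x1 R - xs), y1 R R' i - yk R i⟫) +
          (∑ i, (probOf P i)⁻¹ * ⟪S1inv i (y1 R R' i - yk R i), y1 R R' i - yk R i⟫))
        = (τ1⁻¹ + 2 * μg) * ‖x1 R - xs‖ ^ 2
          + ∑ i, (if i ∈ R' then Ai i else Bi i) := by
      intro R'
      rw [Finset.mul_sum, add_sub_assoc, ← Finset.sum_sub_distrib, add_assoc,
        ← Finset.sum_add_distrib]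
      congr 1
      refine Finset.sum_congr rfl fun i _ => ?_
      by_cases h : i ∈ R'
      · simp only [hy1 R R' i, h, if_true, hAi]
      · simp only [hy1 R R' i, h, if_false, hBi, sub_self, inner_zero_right, map_zero,
          inner_zero_left, mul_zero, sub_zero, add_zero]
    calc (∑ R' : Finset (Fin n), P R' *
        ((τ1⁻¹ + 2 * μg) * ‖x1 R - xs‖ ^ 2 +
          (∑ i, ((probOf P i)⁻¹ * ⟪S1inv i (y1 R R' i - ys i), y1 R R' i - ys i⟫ +
            2 * μ i * (probOf P i)⁻¹ * ‖y1 R R' i - ys i‖ ^ 2)) -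
          2 * (∑ i, (probOf P i)⁻¹ * ⟪A i (x1 R - xs), y1 R R' i - yk R i⟫) +
          (∑ i, (probOf P i)⁻¹ * ⟪S1inv i (y1 R R' i - yk R i), y1 R R' i - yk R i⟫)))
        = ∑ R' : Finset (Fin n), (P R' * ((τ1⁻¹ + 2 * μg) * ‖x1 R - xs‖ ^ 2)
            + ∑ i, P R' * (if i ∈ R' then Ai i else Bi i)) := by
          refine Finset.sum_congr rfl fun R' _ => ?_
          rw [hbr R', mul_add, Finset.mul_sum]
      _ = (∑ R' : Finset (Fin n), P R' * ((τ1⁻¹ + 2 * μg) * ‖x1 R - xs‖ ^ 2))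
          + ∑ R' : Finset (Fin n), ∑ i, P R' * (if i ∈ R' then Ai i else Bi i) :=
          Finset.sum_add_distrib
      _ = (τ1⁻¹ + 2 * μg) * ‖x1 R - xs‖ ^ 2
          + ∑ i, (probOf P i * Ai i + (1 - probOf P i) * Bi i) := by
          rw [← Finset.sum_mul, hP1, one_mul, Finset.sum_comm]
          congr 1
          exact Finset.sum_congr rfl fun i _ => sum_ite_prob P hP1 i (Ai i) (Bi i)
      _ = (τ1⁻¹ + 2 * μg) * ‖x1 R - xs‖ ^ 2
          + ∑ i, (⟪S1inv i (yhat1 R i - ys i), yhat1 R i - ys i⟫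
            + 2 * μ i * ‖yhat1 R i - ys i‖ ^ 2
            + ((probOf P i)⁻¹ - 1) * ⟪S1inv i (yk R i - ys i), yk R i - ys i⟫
            + 2 * μ i * ((probOf P i)⁻¹ - 1) * ‖yk R i - ys i‖ ^ 2
            - 2 * (⟪A i (x1 R - xs), yhat1 R i⟫ - ⟪A i (x1 R - xs), yk R i⟫)
            + ⟪S1inv i (yhat1 R i - yk R i), yhat1 R i - yk R i⟫) := by
          congr 1
          refine Finset.sum_congr rfl fun i _ => ?_
          have hpq : probOf P i * (probOf P i)⁻¹ = 1 := mul_inv_cancel₀ (hpne i)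
          have hsub : ⟪A i (x1 R - xs), yhat1 R i - yk R i⟫
              = ⟪A i (x1 R - xs), yhat1 R i⟫ - ⟪A i (x1 R - xs), yk R i⟫ :=
            inner_sub_right _ _ _
          simp only [hAi, hBi]
          rw [hsub]
          linear_combination (⟪S1inv i (yhat1 R i - ys i), yhat1 R i - ys i⟫
            + 2 * μ i * ‖yhat1 R i - ys i‖ ^ 2
            - 2 * (⟪A i (x1 R - xs), yhat1 R i⟫ - ⟪A i (x1 R - xs), yk R i⟫)
            + ⟪S1inv i (yhat1 R i - yk R i), yhat1 R i - yk R i⟫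
            - ⟪S1inv i (yk R i - ys i), yk R i - ys i⟫
            - 2 * μ i * ‖yk R i - ys i‖ ^ 2) * hpq
      _ = (τ1⁻¹ + 2 * μg) * ‖x1 R - xs‖ ^ 2
        + (∑ i, ⟪S1inv i (yhat1 R i - ys i), yhat1 R i - ys i⟫)
        + (∑ i, 2 * μ i * ‖yhat1 R i - ys i‖ ^ 2)
        + (∑ i, ((probOf P i)⁻¹ - 1) * ⟪S1inv i (yk R i - ys i), yk R i - ys i⟫)
        + (∑ i, 2 * μ i * ((probOf P i)⁻¹ - 1) * ‖yk R i - ys i‖ ^ 2)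
        - 2 * (∑ i, ⟪A i (x1 R - xs), yhat1 R i⟫)
        + 2 * (∑ i, ⟪A i (x1 R - xs), yk R i⟫)
        + (∑ i, ⟪S1inv i (yhat1 R i - yk R i), yhat1 R i - yk R i⟫) := by
          simp only [Finset.sum_add_distrib, Finset.sum_sub_distrib, ← Finset.mul_sum]
          ring
  -- Step A : per-sample deterministic estimate
  have hKEY : ∀ R : Finset (Fin n),
      (τ1⁻¹ + 2 * μg) * ‖x1 R - xs‖ ^ 2
        + (∑ i, ⟪S1inv i (yhat1 R i - ys i), yhat1 R i - ys i⟫)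
        + (∑ i, 2 * μ i * ‖yhat1 R i - ys i‖ ^ 2)
        + (∑ i, ⟪S1inv i (yhat1 R i - yk R i), yhat1 R i - yk R i⟫)
        - 2 * (∑ i, ⟪A i (x1 R - xs), yhat1 R i⟫)
        + 2 * (∑ i, ⟪A i (x1 R - xs), yk R i⟫)
      ≤ τ1⁻¹ * ‖xk - xs‖ ^ 2
        + (∑ i, ⟪S1inv i (yk R i - ys i), yk R i - ys i⟫)
        - 2 * θprev * (∑ i, (probOf P i)⁻¹ * ⟪A i (x1 R - xs), yk R i - ykm1 i⟫)
        - τ1⁻¹ * ‖x1 R - xk‖ ^ 2 := by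
    intro R
    -- primal prox step, strengthened by strong convexity
    have hPx := proxR_strong hg (hx1 R) xs
    set w := ∑ i : Fin n, (ContinuousLinearMap.adjoint (A i)) (ybark R i) with hwdef
    have hE1 : ‖x1 R - (xk - τ1 • w)‖^2
        = ‖x1 R - xk‖^2 + 2*(τ1*⟪x1 R - xk, w⟫) + τ1^2*‖w‖^2 := by
      rw [show x1 R - (xk - τ1 • w) = (x1 R - xk) + τ1 • w from by module,
        norm_add_sq_real, real_inner_smul_right, norm_smul]
      simp [Real.norm_eq_abs, mul_pow, sq_abs]
    have hE2 : ‖xs - (xk - τ1 • w)‖^2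
        = ‖xs - xk‖^2 + 2*(τ1*⟪xs - xk, w⟫) + τ1^2*‖w‖^2 := by
      rw [show xs - (xk - τ1 • w) = (xs - xk) + τ1 • w from by module,
        norm_add_sq_real, real_inner_smul_right, norm_smul]
      simp [Real.norm_eq_abs, mul_pow, sq_abs]
    have hs1 : (1/(2*τ1)) * (‖x1 R - xk‖^2 + 2*(τ1*⟪x1 R - xk, w⟫) + τ1^2*‖w‖^2)
        = τ1⁻¹/2*‖x1 R - xk‖^2 + ⟪x1 R - xk, w⟫ + τ1/2*‖w‖^2 := by
      field_simp
    have hs2 : (1/(2*τ1)) * (‖xs - xk‖^2 + 2*(τ1*⟪xs - xk, w⟫) + τ1^2*‖w‖^2)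
        = τ1⁻¹/2*‖xs - xk‖^2 + ⟪xs - xk, w⟫ + τ1/2*‖w‖^2 := by
      field_simp
    have hs3 : (1/(2*τ1)) * ‖xs - x1 R‖^2 = τ1⁻¹/2 * ‖xs - x1 R‖^2 := by
      rw [one_div, mul_inv]; ring
    rw [hE1, hE2, hs1, hs2, hs3] at hPx
    have hE4 : ⟪x1 R - xs, w⟫ = ∑ i, ⟪A i (x1 R - xs), ybark R i⟫ := by
      rw [hwdef, inner_sum]
      exact Finset.sum_congr rfl fun i _ => ContinuousLinearMap.adjoint_inner_right _ _ _
    have hP2 : τ1⁻¹*‖x1 R - xk‖^2 + 2*(∑ i, ⟪A i (x1 R - xs), ybark R i⟫) + 2*(g (x1 R))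
        + (τ1⁻¹+μg)*‖xs - x1 R‖^2 ≤ τ1⁻¹*‖xs - xk‖^2 + 2*(g xs) := by
      have h3 : ⟪x1 R - xs, w⟫ = ⟪x1 R - xk, w⟫ - ⟪xs - xk, w⟫ := by
        rw [← inner_sub_left]; congr 1; abel
      rw [← hE4, h3]
      linarith [hPx]
    -- strengthened saddle-point inequality for g
    have hgs2 := subgrad_strong hg hgs (x1 R)
    have hE5 : ⟪-(∑ i, (ContinuousLinearMap.adjoint (A i)) (ys i)), x1 R - xs⟫
        = -(∑ i, ⟪A i (x1 R - xs), ys i⟫) := by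
      rw [inner_neg_left, sum_inner]
      congr 1
      exact Finset.sum_congr rfl fun i _ => by
        rw [ContinuousLinearMap.adjoint_inner_left, real_inner_comm]
    rw [hE5] at hgs2
    -- dual prox steps, strengthened, combined with the saddle inequalities
    have hDi : ∀ i, ⟪S1inv i (yhat1 R i - ys i), yhat1 R i - ys i⟫
        + 2 * μ i * ‖yhat1 R i - ys i‖^2
        + ⟪S1inv i (yhat1 R i - yk R i), yhat1 R i - yk R i⟫
        + 2*⟪A i (x1 R - xs), ys i⟫ - 2*⟪A i (x1 R - xs), yhat1 R i⟫
        ≤ ⟪S1inv i (yk R i - ys i), yk R i - ys i⟫ := by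
      intro i
      have hprox := prox_strong_general (S1inv i) (hfstar i) (hyhat1 R i) (ys i)
      have ha1 : yhat1 R i - (yk R i + S1 i (A i (x1 R)))
          = (yhat1 R i - yk R i) - S1 i (A i (x1 R)) := by abel
      have ha2 : ys i - (yk R i + S1 i (A i (x1 R)))
          = (ys i - yk R i) - S1 i (A i (x1 R)) := by abel
      rw [ha1, ha2, quad_expand (hS1inv i).1 (hS1inv i).2 (hS1 i),
        quad_expand (hS1inv i).1 (hS1inv i).2 (hS1 i)] at hprox
      have hsf := subgrad_strong (hfstar i) (hfs i) (yhat1 R i)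
      have hb1 : ⟪S1inv i (ys i - yhat1 R i), ys i - yhat1 R i⟫
          = ⟪S1inv i (yhat1 R i - ys i), yhat1 R i - ys i⟫ := by
        rw [show ys i - yhat1 R i = -(yhat1 R i - ys i) from by abel, map_neg, inner_neg_neg]
      have hb2 : ⟪S1inv i (ys i - yk R i), ys i - yk R i⟫
          = ⟪S1inv i (yk R i - ys i), yk R i - ys i⟫ := by
        rw [show ys i - yk R i = -(yk R i - ys i) from by abel, map_neg, inner_neg_neg]
      have hb3 : ‖ys i - yhat1 R i‖^2 = ‖yhat1 R i - ys i‖^2 := by rw [norm_sub_rev]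
      have hb5 : ⟪A i xs, yhat1 R i - ys i⟫ - ⟪yhat1 R i - yk R i, A i (x1 R)⟫
            + ⟪ys i - yk R i, A i (x1 R)⟫
          = ⟪A i (x1 R - xs), ys i⟫ - ⟪A i (x1 R - xs), yhat1 R i⟫ := by
        simp only [map_sub, inner_sub_left, inner_sub_right]
        linear_combination real_inner_comm (yhat1 R i) ((A i) (x1 R))
          - real_inner_comm (ys i) ((A i) (x1 R))
      rw [hb1, hb2, hb3] at hprox
      linarith [hprox, hsf, hb5]
    have hDsum : (∑ i, ⟪S1inv i (yhat1 R i - ys i), yhat1 R i - ys i⟫)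
        + (∑ i, 2 * μ i * ‖yhat1 R i - ys i‖^2)
        + (∑ i, ⟪S1inv i (yhat1 R i - yk R i), yhat1 R i - yk R i⟫)
        + 2*(∑ i, ⟪A i (x1 R - xs), ys i⟫) - 2*(∑ i, ⟪A i (x1 R - xs), yhat1 R i⟫)
        ≤ ∑ i, ⟪S1inv i (yk R i - ys i), yk R i - ys i⟫ := by
      have h := Finset.sum_le_sum (fun i (_ : i ∈ (Finset.univ : Finset (Fin n))) => hDi i)
      simp only [Finset.sum_add_distrib, Finset.sum_sub_distrib, ← Finset.mul_sum] at h
      exact h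
    -- extrapolation decomposition
    have hbar : (∑ i, ⟪A i (x1 R - xs), ybark R i⟫)
        = (∑ i, ⟪A i (x1 R - xs), yk R i⟫)
          + θprev * (∑ i, (probOf P i)⁻¹ * ⟪A i (x1 R - xs), yk R i - ykm1 i⟫) := by
      rw [Finset.mul_sum, ← Finset.sum_add_distrib]
      refine Finset.sum_congr rfl fun i _ => ?_
      rw [hybark R i, inner_add_right, real_inner_smul_right]
      ring
    have hn1 : ‖xs - x1 R‖^2 = ‖x1 R - xs‖^2 := by rw [norm_sub_rev]
    have hn2 : ‖xs - xk‖^2 = ‖xk - xs‖^2 := by rw [norm_sub_rev]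
    rw [hn1, hn2] at hP2
    linarith [hP2, hgs2, hDsum, hbar]
  -- splitting the extrapolated cross term
  have hsplitA : ∀ R : Finset (Fin n),
      (∑ i, (probOf P i)⁻¹ * ⟪A i (x1 R - xs), yk R i - ykm1 i⟫)
      = (∑ i, (probOf P i)⁻¹ * ⟪A i (xk - xs), yk R i - ykm1 i⟫)
        - (∑ i, (probOf P i)⁻¹ * ⟪A i (xk - x1 R), yk R i - ykm1 i⟫) := by
    intro R
    rw [← Finset.sum_sub_distrib]
    refine Finset.sum_congr rfl fun i _ => ?_
    rw [show A i (x1 R - xs) = A i (xk - xs) - A i (xk - x1 R) from by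
      rw [← map_sub]; congr 1; abel, inner_sub_left]
    ring
  -- per-sample bound on the conditional expectation
  have hstep : ∀ R : Finset (Fin n),
      (∑ R' : Finset (Fin n), P R' *
        ((τ1⁻¹ + 2 * μg) * ‖x1 R - xs‖ ^ 2 +
          (∑ i, ((probOf P i)⁻¹ * ⟪S1inv i (y1 R R' i - ys i), y1 R R' i - ys i⟫ +
            2 * μ i * (probOf P i)⁻¹ * ‖y1 R R' i - ys i‖ ^ 2)) -
          2 * (∑ i, (probOf P i)⁻¹ * ⟪A i (x1 R - xs), y1 R R' i - yk R i⟫) +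
          (∑ i, (probOf P i)⁻¹ * ⟪S1inv i (y1 R R' i - yk R i), y1 R R' i - yk R i⟫)))
      ≤ (τ1⁻¹ * ‖xk - xs‖ ^ 2 +
          (∑ i, ((probOf P i)⁻¹ * ⟪S1inv i (yk R i - ys i), yk R i - ys i⟫ +
            2 * μ i * ((probOf P i)⁻¹ - 1) * ‖yk R i - ys i‖ ^ 2)) -
          2 * θprev * (∑ i, (probOf P i)⁻¹ * ⟪A i (xk - xs), yk R i - ykm1 i⟫))
        + (2 * θprev * (∑ i, (probOf P i)⁻¹ * ⟪A i (xk - x1 R), yk R i - ykm1 i⟫)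
          - τ1⁻¹ * ‖x1 R - xk‖ ^ 2) := by
    intro R
    rw [hEXP R]
    have hq1 : (∑ i, ((probOf P i)⁻¹ - 1) * ⟪S1inv i (yk R i - ys i), yk R i - ys i⟫)
        = (∑ i, (probOf P i)⁻¹ * ⟪S1inv i (yk R i - ys i), yk R i - ys i⟫)
          - (∑ i, ⟪S1inv i (yk R i - ys i), yk R i - ys i⟫) := by
      rw [← Finset.sum_sub_distrib]
      exact Finset.sum_congr rfl fun i _ => by ring
    have hq2 : (∑ i, ((probOf P i)⁻¹ * ⟪S1inv i (yk R i - ys i), yk R i - ys i⟫ +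
          2 * μ i * ((probOf P i)⁻¹ - 1) * ‖yk R i - ys i‖ ^ 2))
        = (∑ i, (probOf P i)⁻¹ * ⟪S1inv i (yk R i - ys i), yk R i - ys i⟫)
          + (∑ i, 2 * μ i * ((probOf P i)⁻¹ - 1) * ‖yk R i - ys i‖ ^ 2) :=
      Finset.sum_add_distrib
    have hsA : 2 * θprev * (∑ i, (probOf P i)⁻¹ * ⟪A i (x1 R - xs), yk R i - ykm1 i⟫)
        = 2 * θprev * (∑ i, (probOf P i)⁻¹ * ⟪A i (xk - xs), yk R i - ykm1 i⟫)
          - 2 * θprev * (∑ i, (probOf P i)⁻¹ * ⟪A i (xk - x1 R), yk R i - ykm1 i⟫) := by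
      rw [hsplitA R]; ring
    linarith [hKEY R]
  -- Step D : Young's inequality + ESO bound for the gradient-type term
  have hD : (∑ R : Finset (Fin n), P R *
        (2 * θprev * (∑ i, (probOf P i)⁻¹ * ⟪A i (xk - x1 R), yk R i - ykm1 i⟫)
          - τ1⁻¹ * ‖x1 R - xk‖ ^ 2))
      ≤ ∑ R : Finset (Fin n), P R * (γsq * θprev ^ 2 *
          (∑ i, (probOf P i)⁻¹ * ⟪S1inv i (yk R i - ykm1 i), yk R i - ykm1 i⟫)) := by
    have hdelta : ∀ (R : Finset (Fin n)) i, yk R i - ykm1 i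
        = if i ∈ R then yhatk i - ykm1 i else 0 := by
      intro R i
      rw [hyk R i]
      by_cases h : i ∈ R <;> simp [h]
    have hsne : Real.sqrt τ1 ≠ 0 := by positivity
    -- instantiate the ESO inequality
    have hE := hESO (fun i => (Real.sqrt τ1)⁻¹ •
      ((probOf P i)⁻¹ • (S1inv i ((S1sqrt i) (yhatk i - ykm1 i)))))
    have hzA : ∀ i, Real.sqrt τ1 •
        (ContinuousLinearMap.adjoint ((S1sqrt i).comp (A i)))
          ((Real.sqrt τ1)⁻¹ • ((probOf P i)⁻¹ • (S1inv i ((S1sqrt i) (yhatk i - ykm1 i)))))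
        = (ContinuousLinearMap.adjoint (A i)) ((probOf P i)⁻¹ • (yhatk i - ykm1 i)) := by
      intro i
      rw [ContinuousLinearMap.adjoint_comp, (hS1sqrt i).adjoint_eq,
        ContinuousLinearMap.comp_apply]
      simp only [map_smul]
      rw [op_sqW (hS1inv i).1 (hS1inv i).2 (hS1sq i), smul_smul,
        mul_inv_cancel₀ hsne, one_smul]
    have hznorm : ∀ i, ‖(Real.sqrt τ1)⁻¹ •
          ((probOf P i)⁻¹ • (S1inv i ((S1sqrt i) (yhatk i - ykm1 i))))‖^2
        = τ1⁻¹ * ((probOf P i)⁻¹ * ((probOf P i)⁻¹ *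
            ⟪S1inv i (yhatk i - ykm1 i), yhatk i - ykm1 i⟫)) := by
      intro i
      rw [norm_smul, norm_smul, mul_pow, mul_pow,
        op_Wnorm (hS1inv i).1 (hS1inv i).2 (hS1sq i) (hS1sqrt i),
        Real.norm_eq_abs, Real.norm_eq_abs, sq_abs, sq_abs,
        ← Real.sqrt_inv, Real.sq_sqrt (by positivity : (0:ℝ) ≤ τ1⁻¹)]
      ring
    simp only [hzA, hznorm] at hE
    -- Young's inequality, per sample
    have hyoung : ∀ R : Finset (Fin n),
        2 * θprev * (∑ i, (probOf P i)⁻¹ * ⟪A i (xk - x1 R), yk R i - ykm1 i⟫)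
          - τ1⁻¹ * ‖x1 R - xk‖ ^ 2
        ≤ τ1 * θprev^2 * ‖∑ i ∈ R, (ContinuousLinearMap.adjoint (A i))
            ((probOf P i)⁻¹ • (yhatk i - ykm1 i))‖^2 := by
      intro R
      set uR := ∑ i ∈ R, (ContinuousLinearMap.adjoint (A i))
        ((probOf P i)⁻¹ • (yhatk i - ykm1 i)) with huR
      have hcross : (∑ i, (probOf P i)⁻¹ * ⟪A i (xk - x1 R), yk R i - ykm1 i⟫)
          = ⟪xk - x1 R, uR⟫ := by
        have h1 : ∀ i, (probOf P i)⁻¹ * ⟪A i (xk - x1 R), yk R i - ykm1 i⟫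
            = if i ∈ R then ⟪xk - x1 R, (ContinuousLinearMap.adjoint (A i))
                ((probOf P i)⁻¹ • (yhatk i - ykm1 i))⟫ else 0 := by
          intro i
          rw [hdelta R i]
          by_cases h : i ∈ R
          · simp only [h, if_true, ContinuousLinearMap.adjoint_inner_right,
              real_inner_smul_right]
          · simp [h]
        rw [Finset.sum_congr rfl fun i _ => h1 i, Finset.sum_ite_mem, Finset.univ_inter,
          huR, inner_sum]
      rw [hcross, show ‖x1 R - xk‖^2 = ‖xk - x1 R‖^2 from by rw [norm_sub_rev]]
      have h0 : (0:ℝ) ≤ ‖(xk - x1 R) - (τ1*θprev) • uR‖^2 := by positivity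
      have h0' : ‖(xk - x1 R) - (τ1*θprev) • uR‖^2
          = ‖xk - x1 R‖^2 - 2*((τ1*θprev)*⟪xk - x1 R, uR⟫) + (τ1*θprev)^2*‖uR‖^2 := by
        rw [norm_sub_sq_real, real_inner_smul_right, norm_smul]
        simp [Real.norm_eq_abs, mul_pow, sq_abs]
      rw [h0'] at h0
      have hmul : τ1 * (2 * θprev * ⟪xk - x1 R, uR⟫ - τ1⁻¹ * ‖xk - x1 R‖^2)
          ≤ τ1 * (τ1 * θprev^2 * ‖uR‖^2) := by
        have hww : τ1 * (τ1⁻¹ * ‖xk - x1 R‖^2) = ‖xk - x1 R‖^2 := by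
          rw [← mul_assoc, mul_inv_cancel₀ hτne, one_mul]
        rw [mul_sub, hww]
        nlinarith [h0]
      exact (mul_le_mul_iff_right₀ hτ1).mp hmul
    -- identification of the limiting ESO bound with the γ² term
    have hG : ∀ R : Finset (Fin n),
        (∑ i, (probOf P i)⁻¹ * ⟪S1inv i (yk R i - ykm1 i), yk R i - ykm1 i⟫)
        = ∑ i, (if i ∈ R then (probOf P i)⁻¹ *
            ⟪S1inv i (yhatk i - ykm1 i), yhatk i - ykm1 i⟫ else 0) := by
      intro R
      refine Finset.sum_congr rfl fun i _ => ?_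
      rw [hdelta R i]
      by_cases h : i ∈ R
      · simp [h]
      · simp [h]
    have hGsum : (∑ R : Finset (Fin n), P R * (γsq * θprev ^ 2 *
          (∑ i, (probOf P i)⁻¹ * ⟪S1inv i (yk R i - ykm1 i), yk R i - ykm1 i⟫)))
        = γsq * θprev ^ 2 *
          (∑ i, ⟪S1inv i (yhatk i - ykm1 i), yhatk i - ykm1 i⟫) := by
      have h2 : ∀ R : Finset (Fin n), P R * (γsq * θprev ^ 2 *
            (∑ i, (probOf P i)⁻¹ * ⟪S1inv i (yk R i - ykm1 i), yk R i - ykm1 i⟫))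
          = γsq * θprev ^ 2 * (∑ i, P R * (if i ∈ R then (probOf P i)⁻¹ *
              ⟪S1inv i (yhatk i - ykm1 i), yhatk i - ykm1 i⟫ else 0)) := by
        intro R
        rw [hG R, ← Finset.mul_sum]
        ring
      rw [Finset.sum_congr rfl fun R _ => h2 R, ← Finset.mul_sum]
      congr 1
      rw [Finset.sum_comm]
      refine Finset.sum_congr rfl fun i _ => ?_
      rw [sum_ite_prob P hP1 i _ 0, mul_zero, add_zero, ← mul_assoc,
        mul_inv_cancel₀ (hpne i), one_mul]
    calc (∑ R : Finset (Fin n), P R *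
        (2 * θprev * (∑ i, (probOf P i)⁻¹ * ⟪A i (xk - x1 R), yk R i - ykm1 i⟫)
          - τ1⁻¹ * ‖x1 R - xk‖ ^ 2))
        ≤ ∑ R : Finset (Fin n), P R * (τ1 * θprev^2 *
            ‖∑ i ∈ R, (ContinuousLinearMap.adjoint (A i))
              ((probOf P i)⁻¹ • (yhatk i - ykm1 i))‖^2) :=
          Finset.sum_le_sum fun R _ => mul_le_mul_of_nonneg_left (hyoung R) (hP0 R)
      _ = (τ1 * θprev^2) * ∑ R : Finset (Fin n), P R *
            ‖∑ i ∈ R, (ContinuousLinearMap.adjoint (A i))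
              ((probOf P i)⁻¹ • (yhatk i - ykm1 i))‖^2 := by
          rw [Finset.mul_sum]
          exact Finset.sum_congr rfl fun R _ => by ring
      _ ≤ (τ1 * θprev^2) * (∑ i, probOf P i * v i * (τ1⁻¹ * ((probOf P i)⁻¹ *
            ((probOf P i)⁻¹ * ⟪S1inv i (yhatk i - ykm1 i), yhatk i - ykm1 i⟫)))) :=
          mul_le_mul_of_nonneg_left hE (by positivity)
      _ = θprev^2 * (∑ i, (v i * (probOf P i)⁻¹) *
            ⟪S1inv i (yhatk i - ykm1 i), yhatk i - ykm1 i⟫) := by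
          rw [Finset.mul_sum, Finset.mul_sum]
          refine Finset.sum_congr rfl fun i _ => ?_
          field_simp [hpne i, hτne]
      _ ≤ θprev^2 * (∑ i, γsq * ⟪S1inv i (yhatk i - ykm1 i), yhatk i - ykm1 i⟫) := by
          refine mul_le_mul_of_nonneg_left ?_ (sq_nonneg θprev)
          refine Finset.sum_le_sum fun i _ => ?_
          have hpos : (0:ℝ) ≤ ⟪S1inv i (yhatk i - ykm1 i), yhatk i - ykm1 i⟫ := by
            rw [← op_Wnorm (hS1inv i).1 (hS1inv i).2 (hS1sq i) (hS1sqrt i)]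
            positivity
          refine mul_le_mul_of_nonneg_right ?_ hpos
          have hle := Finset.le_sup' (fun j => v j / probOf P j) (Finset.mem_univ i)
          rw [div_eq_mul_inv] at hle
          exact hle
      _ = ∑ R : Finset (Fin n), P R * (γsq * θprev ^ 2 *
          (∑ i, (probOf P i)⁻¹ * ⟪S1inv i (yk R i - ykm1 i), yk R i - ykm1 i⟫)) := by
          rw [hGsum, ← Finset.mul_sum]
          ring
  -- assembling everything
  calc (∑ R : Finset (Fin n), ∑ R' : Finset (Fin n), P R * P R' *
        ((τ1⁻¹ + 2 * μg) * ‖x1 R - xs‖ ^ 2 +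
          (∑ i, ((probOf P i)⁻¹ * ⟪S1inv i (y1 R R' i - ys i), y1 R R' i - ys i⟫ +
            2 * μ i * (probOf P i)⁻¹ * ‖y1 R R' i - ys i‖ ^ 2)) -
          2 * (∑ i, (probOf P i)⁻¹ * ⟪A i (x1 R - xs), y1 R R' i - yk R i⟫) +
          (∑ i, (probOf P i)⁻¹ * ⟪S1inv i (y1 R R' i - yk R i), y1 R R' i - yk R i⟫)))
      = ∑ R : Finset (Fin n), P R * (∑ R' : Finset (Fin n), P R' *
        ((τ1⁻¹ + 2 * μg) * ‖x1 R - xs‖ ^ 2 +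
          (∑ i, ((probOf P i)⁻¹ * ⟪S1inv i (y1 R R' i - ys i), y1 R R' i - ys i⟫ +
            2 * μ i * (probOf P i)⁻¹ * ‖y1 R R' i - ys i‖ ^ 2)) -
          2 * (∑ i, (probOf P i)⁻¹ * ⟪A i (x1 R - xs), y1 R R' i - yk R i⟫) +
          (∑ i, (probOf P i)⁻¹ * ⟪S1inv i (y1 R R' i - yk R i), y1 R R' i - yk R i⟫))) := by
        refine Finset.sum_congr rfl fun R _ => ?_
        rw [Finset.mul_sum]
        exact Finset.sum_congr rfl fun R' _ => (mul_assoc _ _ _)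
    _ ≤ ∑ R : Finset (Fin n), P R *
        ((τ1⁻¹ * ‖xk - xs‖ ^ 2 +
          (∑ i, ((probOf P i)⁻¹ * ⟪S1inv i (yk R i - ys i), yk R i - ys i⟫ +
            2 * μ i * ((probOf P i)⁻¹ - 1) * ‖yk R i - ys i‖ ^ 2)) -
          2 * θprev * (∑ i, (probOf P i)⁻¹ * ⟪A i (xk - xs), yk R i - ykm1 i⟫))
        + (2 * θprev * (∑ i, (probOf P i)⁻¹ * ⟪A i (xk - x1 R), yk R i - ykm1 i⟫)
          - τ1⁻¹ * ‖x1 R - xk‖ ^ 2)) :=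
        Finset.sum_le_sum fun R _ => mul_le_mul_of_nonneg_left (hstep R) (hP0 R)
    _ = (∑ R : Finset (Fin n), P R *
        (τ1⁻¹ * ‖xk - xs‖ ^ 2 +
          (∑ i, ((probOf P i)⁻¹ * ⟪S1inv i (yk R i - ys i), yk R i - ys i⟫ +
            2 * μ i * ((probOf P i)⁻¹ - 1) * ‖yk R i - ys i‖ ^ 2)) -
          2 * θprev * (∑ i, (probOf P i)⁻¹ * ⟪A i (xk - xs), yk R i - ykm1 i⟫)))
        + (∑ R : Finset (Fin n), P R *
        (2 * θprev * (∑ i, (probOf P i)⁻¹ * ⟪A i (xk - x1 R), yk R i - ykm1 i⟫)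
          - τ1⁻¹ * ‖x1 R - xk‖ ^ 2)) := by
        rw [← Finset.sum_add_distrib]
        exact Finset.sum_congr rfl fun R _ => by ring
    _ ≤ (∑ R : Finset (Fin n), P R *
        (τ1⁻¹ * ‖xk - xs‖ ^ 2 +
          (∑ i, ((probOf P i)⁻¹ * ⟪S1inv i (yk R i - ys i), yk R i - ys i⟫ +
            2 * μ i * ((probOf P i)⁻¹ - 1) * ‖yk R i - ys i‖ ^ 2)) -
          2 * θprev * (∑ i, (probOf P i)⁻¹ * ⟪A i (xk - xs), yk R i - ykm1 i⟫)))
        + (∑ R : Finset (Fin n), P R * (γsq * θprev ^ 2 *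
          (∑ i, (probOf P i)⁻¹ * ⟪S1inv i (yk R i - ykm1 i), yk R i - ykm1 i⟫))) := by
        linarith [hD]
    _ = ∑ R : Finset (Fin n), P R *
        (τ1⁻¹ * ‖xk - xs‖ ^ 2 +
          (∑ i, ((probOf P i)⁻¹ * ⟪S1inv i (yk R i - ys i), yk R i - ys i⟫ +
            2 * μ i * ((probOf P i)⁻¹ - 1) * ‖yk R i - ys i‖ ^ 2)) -
          2 * θprev * (∑ i, (probOf P i)⁻¹ * ⟪A i (xk - xs), yk R i - ykm1 i⟫) +
          γsq * θprev ^ 2 *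
            (∑ i, (probOf P i)⁻¹ * ⟪S1inv i (yk R i - ykm1 i), yk R i - ykm1 i⟫)) := by
        rw [← Finset.sum_add_distrib]
        exact Finset.sum_congr rfl fun R _ => by ring
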